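/- Let A be an n×n real matrix that is Hurwitz (every eigenvalue has negative real part). Then for every symmetric positive definite matrix Q there exists a symmetric positive definite matrix P satisfying the Lyapunov equation P A + Aᵀ P + Q = 0. -/

import Mathlib

open scoped Nat ENNReal NNReal Topology
open Matrix NormedSpace MeasureTheory Filter Set

attribute [local instance] Matrix.linftyOpNormedAddCommGroup Matrix.linftyOpNormedRing
  Matrix.linftyOpNormedAlgebra Matrix.linftyOpNormedSpace
attribute [local instance] Matrix.linftyOpSeminormedAddCommGroup Matrix.linftyOpIsBoundedSMul
  Matrix.linftyOpNormSMulClass Matrix.linftyOpNonUnitalSemiNormedRing Matrix.linftyOpSemiNormedRing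
  Matrix.linftyOpNonUnitalNormedRing

namespace LyapAux

variable {N : ℕ}

lemma pow_mulVec {M : Matrix (Fin N) (Fin N) ℂ} {c : ℂ} {v : Fin N → ℂ}
    (h : M.mulVec v = c • v) (k : ℕ) : (M ^ k).mulVec v = c ^ k • v := by
  induction k with
  | zero => simp
  | succ k ih =>
    rw [pow_succ, ← Matrix.mulVec_mulVec, h, Matrix.mulVec_smul, ih, smul_smul, pow_succ,
      mul_comm]

lemma exp_mulVec {M : Matrix (Fin N) (Fin N) ℂ} {c : ℂ} {v : Fin N → ℂ}
    (h : M.mulVec v = c • v) : (exp M).mulVec v = Complex.exp c • v := by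
  have if1 : FiniteDimensional ℂ (Matrix (Fin N) (Fin N) ℂ) := by infer_instance
  haveI : CompleteSpace (Matrix (Fin N) (Fin N) ℂ) := FiniteDimensional.complete ℂ _
  let L0 : Matrix (Fin N) (Fin N) ℂ →ₗ[ℂ] (Fin N → ℂ) :=
    { toFun := fun M => M.mulVec v
      map_add' := fun M1 M2 => Matrix.add_mulVec M1 M2 v
      map_smul' := fun c M => by simp [Matrix.smul_mulVec] }
  let L : Matrix (Fin N) (Fin N) ℂ →L[ℂ] (Fin N → ℂ) := L0.toContinuousLinearMap
  have hL : ∀ M' : Matrix (Fin N) (Fin N) ℂ, L M' = M'.mulVec v := fun _ => rfl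
  have h1 : (exp M).mulVec v = L (∑' k : ℕ, ((k ! : ℂ))⁻¹ • M ^ k) := by
    rw [← hL, exp_eq_tsum ℂ]
  rw [h1, L.map_tsum (expSeries_summable' (𝕂 := ℂ) M)]
  have h2 : ∀ k : ℕ, L (((k ! : ℂ))⁻¹ • M ^ k) = (((k ! : ℂ))⁻¹ • c ^ k) • v := by
    intro k
    rw [_root_.map_smul, hL, pow_mulVec h, smul_smul, smul_eq_mul]
  simp_rw [h2]
  rw [(expSeries_summable' (𝕂 := ℂ) c).tsum_smul_const, Complex.exp_eq_exp_ℂ, exp_eq_tsum ℂ]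

-- eigenvector existence from spectrum membership
lemma eigvec_of_mem_spectrum (M : Matrix (Fin N) (Fin N) ℂ) (μ : ℂ)
    (hμ : μ ∈ spectrum ℂ M) : ∃ v : Fin N → ℂ, v ≠ 0 ∧ M.mulVec v = μ • v := by
  rw [spectrum.mem_iff] at hμ
  rw [Matrix.isUnit_iff_isUnit_det, isUnit_iff_ne_zero, not_not,
    ← Matrix.exists_mulVec_eq_zero_iff] at hμ
  obtain ⟨v, hv, hv0⟩ := hμ
  refine ⟨v, hv, ?_⟩
  rw [Algebra.algebraMap_eq_smul_one, Matrix.sub_mulVec, Matrix.smul_mulVec,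
    Matrix.one_mulVec, sub_eq_zero] at hv0
  exact hv0.symm

lemma mem_spectrum_of_eigvec (M : Matrix (Fin N) (Fin N) ℂ) (μ : ℂ) (v : Fin N → ℂ)
    (hv : v ≠ 0) (h : M.mulVec v = μ • v) : μ ∈ spectrum ℂ M := by
  rw [spectrum.mem_iff, Matrix.isUnit_iff_isUnit_det, isUnit_iff_ne_zero, not_not,
    ← Matrix.exists_mulVec_eq_zero_iff]
  refine ⟨v, hv, ?_⟩
  rw [Algebra.algebraMap_eq_smul_one, Matrix.sub_mulVec, Matrix.smul_mulVec,
    Matrix.one_mulVec, h, sub_self]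

lemma spectrum_exp_subset (B : Matrix (Fin N) (Fin N) ℂ) (μ : ℂ)
    (hμ : μ ∈ spectrum ℂ (exp B)) : ∃ z ∈ spectrum ℂ B, μ = Complex.exp z := by
  haveI : CompleteSpace (Matrix (Fin N) (Fin N) ℂ) := FiniteDimensional.complete ℂ _
  obtain ⟨v, hv, hvE⟩ := eigvec_of_mem_spectrum _ _ hμ
  set E := Module.End.eigenspace (Matrix.mulVecLin (exp B)) μ with hE
  have hvmem : v ∈ E := by
    rw [hE, Module.End.mem_eigenspace_iff, Matrix.mulVecLin_apply]; exact hvE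
  have hcomm : exp B * B = B * exp B := by
    exact ((Commute.refl B).exp_left).eq
  have hinv : ∀ x ∈ E, Matrix.mulVecLin B x ∈ E := by
    intro x hx
    rw [hE, Module.End.mem_eigenspace_iff] at hx ⊢
    simp only [Matrix.mulVecLin_apply] at hx ⊢
    rw [Matrix.mulVec_mulVec, hcomm, ← Matrix.mulVec_mulVec, hx, Matrix.mulVec_smul]
  let g' := (Matrix.mulVecLin B).restrict hinv
  haveI : Nontrivial E := nontrivial_of_ne (⟨v, hvmem⟩ : E) 0 (by
    intro hcon
    exact hv (congrArg Subtype.val hcon))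
  obtain ⟨lam, hlam⟩ := Module.End.exists_eigenvalue g'
  obtain ⟨w, hw⟩ := hlam.exists_hasEigenvector
  have hw1 : (w : Fin N → ℂ) ≠ 0 := fun hcon => hw.right (Subtype.ext hcon)
  have hgw : B.mulVec (w : Fin N → ℂ) = lam • (w : Fin N → ℂ) := by
    have := congrArg Subtype.val hw.apply_eq_smul
    simpa [g', LinearMap.restrict_apply, Matrix.mulVecLin_apply] using this
  have hexp : (exp B).mulVec (w : Fin N → ℂ) = Complex.exp lam • (w : Fin N → ℂ) :=
    exp_mulVec hgw
  have hmu : (exp B).mulVec (w : Fin N → ℂ) = μ • (w : Fin N → ℂ) := by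
    simpa [Matrix.mulVecLin_apply] using Module.End.mem_eigenspace_iff.mp w.2
  have : μ = Complex.exp lam := by
    have h0 : (μ - Complex.exp lam) • (w : Fin N → ℂ) = 0 := by
      rw [sub_smul, ← hmu, ← hexp, sub_self]
    rcases smul_eq_zero.mp h0 with h | h
    · exact sub_eq_zero.mp h
    · exact absurd h hw1
  exact ⟨lam, mem_spectrum_of_eigvec _ _ _ hw1 hgw, this⟩

lemma pow_norm_le (B : Matrix (Fin N) (Fin N) ℂ) (hN : 0 < N)
    (hB : ∀ μ ∈ spectrum ℂ B, ‖μ‖ < 1) :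
    ∃ C > 0, ∃ r : ℝ, r < 1 ∧ 0 < r ∧ ∀ k : ℕ, ‖B ^ k‖ ≤ C * r ^ k := by
  haveI : CompleteSpace (Matrix (Fin N) (Fin N) ℂ) := FiniteDimensional.complete ℂ _
  haveI : Nonempty (Fin N) := Fin.pos_iff_nonempty.mp hN
  have hρ : spectralRadius ℂ B < 1 := by
    have := spectrum.spectralRadius_lt_of_forall_lt (a := B) (r := 1)
      (fun z hz => by simpa [← NNReal.coe_lt_coe] using hB z hz)
    simpa using this
  obtain ⟨r, hρr, hr1⟩ := ENNReal.lt_iff_exists_nnreal_btwn.mp hρ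
  have hr1' : (r : ℝ) < 1 := by exact_mod_cast hr1
  have hrpos : (0:ℝ≥0∞) < r := lt_of_le_of_lt (zero_le) hρr
  have hrpos' : (0:ℝ) < r := by exact_mod_cast hrpos
  have hev : ∀ᶠ k : ℕ in atTop, (‖B ^ k‖₊ : ℝ≥0∞) ^ (1 / (k:ℝ)) < r :=
    (spectrum.pow_nnnorm_pow_one_div_tendsto_nhds_spectralRadius B).eventually_lt_const hρr
  have hev2 : ∀ᶠ k : ℕ in atTop, ‖B ^ k‖ ≤ (r:ℝ) ^ k := by
    filter_upwards [hev, eventually_ge_atTop 1] with k hk hk1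
    have hk0 : (k:ℝ) ≠ 0 := by positivity
    have h1 : ((‖B ^ k‖₊ : ℝ≥0∞) ^ (1 / (k:ℝ))) ^ (k:ℝ) < (r : ℝ≥0∞) ^ (k:ℝ) :=
      ENNReal.rpow_lt_rpow hk (by positivity)
    rw [← ENNReal.rpow_mul, one_div, inv_mul_cancel₀ hk0, ENNReal.rpow_one] at h1
    have h2 : (‖B ^ k‖₊ : ℝ≥0∞) ≤ (r : ℝ≥0∞) ^ (k : ℕ) := by
      rw [← ENNReal.rpow_natCast]
      exact h1.le
    rw [← ENNReal.coe_pow, ENNReal.coe_le_coe] at h2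
    calc ‖B ^ k‖ = ((‖B ^ k‖₊ : ℝ≥0) : ℝ) := rfl
      _ ≤ ((r ^ k : ℝ≥0) : ℝ) := by exact_mod_cast h2
      _ = (r:ℝ) ^ k := by push_cast; ring
  obtain ⟨K, hK⟩ := eventually_atTop.mp hev2
  set C : ℝ := ((Finset.range (K+1)).sup' ⟨0, by simp⟩ fun k => ‖B ^ k‖ / (r:ℝ) ^ k) ⊔ 1 with hC
  have hC1 : (1:ℝ) ≤ C := le_sup_right
  refine ⟨C, lt_of_lt_of_le one_pos hC1, r, hr1', hrpos', fun k => ?_⟩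
  rcases le_or_gt K k with h | h
  · calc ‖B ^ k‖ ≤ (r:ℝ) ^ k := hK k h
      _ ≤ C * (r:ℝ) ^ k := le_mul_of_one_le_left (by positivity) hC1
  · have hmem : k ∈ Finset.range (K+1) := Finset.mem_range.mpr (by omega)
    have := Finset.le_sup' (f := fun k => ‖B ^ k‖ / (r:ℝ) ^ k) hmem
    have h2 : ‖B ^ k‖ / (r:ℝ) ^ k ≤ C := le_trans this le_sup_left
    rw [div_le_iff₀ (by positivity)] at h2
    linarith [h2]

lemma norm_map_complex (M : Matrix (Fin N) (Fin N) ℝ) :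
    ‖M.map (algebraMap ℝ ℂ)‖ = ‖M‖ := by
  rw [← coe_nnnorm, ← coe_nnnorm]
  congr 1
  rw [Matrix.linfty_opNNNorm_def, Matrix.linfty_opNNNorm_def]
  apply Finset.sup_congr rfl
  intro i _
  apply Finset.sum_congr rfl
  intro j _
  simp [Matrix.map_apply]

lemma map_complex_exp (M : Matrix (Fin N) (Fin N) ℝ) :
    (exp M).map (algebraMap ℝ ℂ) = exp (M.map (algebraMap ℝ ℂ)) := by
  haveI : CompleteSpace (Matrix (Fin N) (Fin N) ℝ) := FiniteDimensional.complete ℝ _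
  haveI : CompleteSpace (Matrix (Fin N) (Fin N) ℂ) := FiniteDimensional.complete ℂ _
  have hcont : Continuous ((algebraMap ℝ ℂ).mapMatrix :
      Matrix (Fin N) (Fin N) ℝ →+* Matrix (Fin N) (Fin N) ℂ) := by
    let L : Matrix (Fin N) (Fin N) ℝ →ₗ[ℝ] Matrix (Fin N) (Fin N) ℂ :=
      { toFun := fun M => M.map (algebraMap ℝ ℂ)
        map_add' := fun M1 M2 => Matrix.map_add _ (fun a b => by push_cast; ring) _ _
        map_smul' := fun c M => Matrix.map_smul _ c (fun a => by
          simp [Algebra.smul_def]) M }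
    exact L.continuous_of_finiteDimensional
  have := map_exp ((algebraMap ℝ ℂ).mapMatrix :
      Matrix (Fin N) (Fin N) ℝ →+* Matrix (Fin N) (Fin N) ℂ) hcont M
  rw [RingHom.mapMatrix_apply] at this
  exact this

lemma exp_decay (hN : 0 < N) (A : Matrix (Fin N) (Fin N) ℝ)
    (hA : ∀ μ ∈ spectrum ℂ (A.map (algebraMap ℝ ℂ)), μ.re < 0) :
    ∃ C > 0, ∃ α > 0, ∀ t : ℝ, 0 ≤ t → ‖exp (t • A)‖ ≤ C * Real.exp (-α * t) := by
  haveI : CompleteSpace (Matrix (Fin N) (Fin N) ℂ) := FiniteDimensional.complete ℂ _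
  set B := A.map (algebraMap ℝ ℂ) with hBdef
  have hspec : ∀ μ ∈ spectrum ℂ (exp B), ‖μ‖ < 1 := by
    intro μ hμ
    obtain ⟨z, hz, rfl⟩ := spectrum_exp_subset B μ hμ
    rw [Complex.norm_exp]
    exact Real.exp_lt_one_iff.mpr (hA z hz)
  obtain ⟨C, hC, r, hr1, hr0, hpow⟩ := pow_norm_le (exp B) hN hspec
  -- bound on exp (s • B) for s ∈ [0,1]
  obtain ⟨C₀, hC₀⟩ := (isCompact_Icc (a := (0:ℝ)) (b := 1)).exists_bound_of_continuousOn
    (f := fun s : ℝ => exp (s • B))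
    ((exp_continuous.comp (continuous_id.smul continuous_const)).continuousOn)
  -- key: norm transfer
  have hmap_smul : ∀ t : ℝ, (t • A).map (algebraMap ℝ ℂ) = t • B := by
    intro t; ext i j
    simp [hBdef, Matrix.map_apply, Complex.real_smul]
  have hkey : ∀ t : ℝ, ‖exp (t • A)‖ = ‖exp (t • B)‖ := by
    intro t
    rw [← norm_map_complex, map_complex_exp, hmap_smul]
  set α : ℝ := -Real.log r with hα
  have hαpos : 0 < α := by
    rw [hα]
    simpa using Real.log_neg hr0 hr1
  set C' : ℝ := max 1 (C * C₀ / r) with hC'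
  refine ⟨C', lt_of_lt_of_le one_pos (le_max_left _ _), α, hαpos, fun t ht => ?_⟩
  set k : ℕ := ⌊t⌋₊ with hk
  have hks : t = (k : ℝ) + (t - k) := by ring
  have hs0 : 0 ≤ t - k := by
    have := Nat.floor_le ht
    linarith
  have hs1 : t - k ≤ 1 := by
    have := Nat.lt_floor_add_one t
    linarith
  have hsplit : exp (t • B) = exp B ^ k * exp ((t - k) • B) := by
    have hcomm : Commute ((k:ℝ) • B) ((t - k) • B) := (Commute.refl B).smul_left _ |>.smul_right _
    calc exp (t • B) = exp ((k:ℝ) • B + (t - k) • B) := by rw [← add_smul]; norm_num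
      _ = exp ((k:ℝ) • B) * exp ((t - k) • B) := exp_add_of_commute hcomm
      _ = exp B ^ k * exp ((t - k) • B) := by
          rw [Nat.cast_smul_eq_nsmul ℝ]
          exact congrArg (· * exp ((t - k) • B)) (NormedSpace.exp_nsmul k B)
  have hbound : ‖exp (t • B)‖ ≤ C * r ^ k * C₀ := by
    rw [hsplit]
    calc ‖exp B ^ k * exp ((t - k) • B)‖ ≤ ‖exp B ^ k‖ * ‖exp ((t - k) • B)‖ :=
          norm_mul_le _ _
      _ ≤ (C * r ^ k) * C₀ := by
          apply mul_le_mul (hpow k) (hC₀ _ ⟨hs0, hs1⟩) (norm_nonneg _)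
          positivity
  have hC₀pos : 0 ≤ C₀ := le_trans (norm_nonneg _) (hC₀ 0 (by norm_num))
  have hrk : r ^ k ≤ Real.exp (-α * t) / r := by
    have h1 : (r : ℝ) ^ k = Real.exp ((k : ℝ) * Real.log r) := by
      rw [Real.exp_nat_mul, Real.exp_log hr0]
    have h2 : Real.exp (-α * t) / r = Real.exp ((t - 1) * Real.log r) := by
      have he : (t - 1) * Real.log r = -α * t - Real.log r := by rw [hα]; ring
      rw [he, Real.exp_sub, Real.exp_log hr0]
    rw [h1, h2]
    apply Real.exp_le_exp.mpr
    have hlogr : Real.log r < 0 := Real.log_neg hr0 hr1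
    nlinarith [hs1]
  calc ‖exp (t • A)‖ = ‖exp (t • B)‖ := hkey t
    _ ≤ C * r ^ k * C₀ := hbound
    _ ≤ C * (Real.exp (-α * t) / r) * C₀ := by
        apply mul_le_mul_of_nonneg_right _ hC₀pos
        exact mul_le_mul_of_nonneg_left hrk hC.le
    _ = (C * C₀ / r) * Real.exp (-α * t) := by ring
    _ ≤ C' * Real.exp (-α * t) := by
        apply mul_le_mul_of_nonneg_right (le_max_right _ _) (Real.exp_pos _).le

lemma spectrum_transpose (M : Matrix (Fin N) (Fin N) ℂ) :
    spectrum ℂ Mᵀ = spectrum ℂ M := by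
  ext μ
  rw [spectrum.mem_iff, spectrum.mem_iff, Matrix.isUnit_iff_isUnit_det,
    Matrix.isUnit_iff_isUnit_det]
  have : algebraMap ℂ (Matrix (Fin N) (Fin N) ℂ) μ - Mᵀ = (algebraMap ℂ _ μ - M)ᵀ := by
    simp [Algebra.algebraMap_eq_smul_one, Matrix.transpose_sub, Matrix.transpose_smul]
  rw [this, Matrix.det_transpose]

noncomputable instance matContinuousENorm : ContinuousENorm (Matrix (Fin N) (Fin N) ℝ) :=
  SeminormedAddGroup.toContinuousENorm

instance matPseudoMetrizable :
    TopologicalSpace.PseudoMetrizableSpace (Matrix (Fin N) (Fin N) ℝ) :=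
  inferInstanceAs (TopologicalSpace.PseudoMetrizableSpace (Fin N → Fin N → ℝ))

end LyapAux

open LyapAux in
theorem hurwitz_lyapunov_equation {n : ℕ} (A : Matrix (Fin n) (Fin n) ℝ)
    (hA : ∀ μ ∈ spectrum ℂ (A.map (algebraMap ℝ ℂ)), μ.re < 0) :
    ∀ Q : Matrix (Fin n) (Fin n) ℝ, Q.PosDef →
      ∃ P : Matrix (Fin n) (Fin n) ℝ, P.PosDef ∧ P * A + Aᵀ * P + Q = 0 := by
  intro Q hQ
  rcases Nat.eq_zero_or_pos n with hn | hn
  · subst hn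
    exact ⟨Q, hQ, Subsingleton.elim _ _⟩
  haveI : CompleteSpace (Matrix (Fin n) (Fin n) ℝ) := FiniteDimensional.complete ℝ _
  -- decay for A and Aᵀ
  obtain ⟨C₁, hC₁, α₁, hα₁, hdec₁⟩ := exp_decay hn A hA
  have hAT : ∀ μ ∈ spectrum ℂ (Aᵀ.map (algebraMap ℝ ℂ)), μ.re < 0 := by
    intro μ hμ
    rw [Matrix.transpose_map, spectrum_transpose] at hμ
    exact hA μ hμ
  obtain ⟨C₂, hC₂, α₂, hα₂, hdec₂⟩ := exp_decay hn Aᵀ hAT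
  set f : ℝ → Matrix (Fin n) (Fin n) ℝ :=
    fun t => exp (t • Aᵀ) * Q * exp (t • A) with hf
  have hf_cont : Continuous f := by
    apply Continuous.mul
    · exact (exp_continuous.comp (continuous_id.smul continuous_const)).mul continuous_const
    · exact exp_continuous.comp (continuous_id.smul continuous_const)
  set β : ℝ := α₁ + α₂ with hβ
  have hβpos : 0 < β := by positivity
  set K : ℝ := C₂ * ‖Q‖ * C₁ with hK
  have hfb : ∀ t : ℝ, 0 ≤ t → ‖f t‖ ≤ K * Real.exp (-β * t) := by
    intro t ht
    have h1 := hdec₁ t ht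
    have h2 := hdec₂ t ht
    calc ‖f t‖ ≤ ‖exp (t • Aᵀ) * Q‖ * ‖exp (t • A)‖ := norm_mul_le _ _
      _ ≤ (‖exp (t • Aᵀ)‖ * ‖Q‖) * ‖exp (t • A)‖ := by
          apply mul_le_mul_of_nonneg_right (norm_mul_le _ _) (norm_nonneg _)
      _ ≤ ((C₂ * Real.exp (-α₂ * t)) * ‖Q‖) * (C₁ * Real.exp (-α₁ * t)) := by
          apply mul_le_mul _ h1 (norm_nonneg _) (by positivity)
          exact mul_le_mul_of_nonneg_right h2 (norm_nonneg _)
      _ = K * (Real.exp (-α₂ * t) * Real.exp (-α₁ * t)) := by ring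
      _ = K * Real.exp (-β * t) := by
          rw [← Real.exp_add]; congr 1; rw [hβ]; ring
  have hgK : IntegrableOn (fun t => K * Real.exp (-β * t)) (Ioi (0:ℝ)) :=
    (exp_neg_integrableOn_Ioi 0 hβpos).const_mul K
  have hfint : IntegrableOn f (Ioi (0:ℝ)) := by
    apply Integrable.mono' hgK hf_cont.aestronglyMeasurable.restrict
    refine (ae_restrict_iff' measurableSet_Ioi).mpr (ae_of_all _ fun t ht => hfb t (le_of_lt ht))
  set P : Matrix (Fin n) (Fin n) ℝ := ∫ t in Ioi (0:ℝ), f t with hP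
  -- derivative
  set f' : ℝ → Matrix (Fin n) (Fin n) ℝ := fun t => Aᵀ * f t + f t * A with hf'
  have hderiv : ∀ t : ℝ, HasDerivAt f (f' t) t := by
    intro t
    have h1 : HasDerivAt (fun u : ℝ => exp (u • Aᵀ)) (Aᵀ * exp (t • Aᵀ)) t :=
      hasDerivAt_exp_smul_const' Aᵀ t
    have h2 : HasDerivAt (fun u : ℝ => exp (u • A)) (exp (t • A) * A) t :=
      hasDerivAt_exp_smul_const A t
    have h3 := (h1.mul_const Q).mul h2
    refine h3.congr_deriv ?_
    symm
    show Aᵀ * (exp (t • Aᵀ) * Q * exp (t • A)) + (exp (t • Aᵀ) * Q * exp (t • A)) * A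
      = Aᵀ * exp (t • Aᵀ) * Q * exp (t • A) + exp (t • Aᵀ) * Q * (exp (t • A) * A)
    noncomm_ring
  -- tendsto 0
  have hlim : Tendsto f atTop (𝓝 0) := by
    have h1 : Tendsto (fun t : ℝ => Real.exp (-(β * t))) atTop (𝓝 0) :=
      Real.tendsto_exp_neg_atTop_nhds_zero.comp (Tendsto.const_mul_atTop hβpos tendsto_id)
    have h2 : Tendsto (fun t : ℝ => K * Real.exp (-β * t)) atTop (𝓝 (0:ℝ)) := by
      simpa [neg_mul] using h1.const_mul K
    apply squeeze_zero_norm' _ h2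
    filter_upwards [eventually_ge_atTop (0:ℝ)] with t ht using hfb t ht
  -- integrable f'
  let L : Matrix (Fin n) (Fin n) ℝ →L[ℝ] Matrix (Fin n) (Fin n) ℝ :=
    LinearMap.toContinuousLinearMap
      { toFun := fun M => Aᵀ * M + M * A
        map_add' := fun M₁ M₂ => by noncomm_ring
        map_smul' := fun c M => by
          simp [mul_smul_comm, smul_mul_assoc] }
  have hLf : ∀ t, L (f t) = f' t := fun t => rfl
  have hf'int : IntegrableOn f' (Ioi (0:ℝ)) := by
    have := L.integrable_comp hfint
    exact this
  -- FTC
  have hFTC : ∫ t in Ioi (0:ℝ), f' t = 0 - f 0 :=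
    MeasureTheory.integral_Ioi_of_hasDerivAt_of_tendsto
      (hf_cont.continuousWithinAt) (fun x _ => hderiv x) hf'int hlim
  have hf0 : f 0 = Q := by
    rw [hf]; simp
  have hint_comm : ∫ t in Ioi (0:ℝ), f' t = Aᵀ * P + P * A := by
    have h := L.integral_comp_comm hfint
    calc ∫ t in Ioi (0:ℝ), f' t = ∫ t in Ioi (0:ℝ), L (f t) := by simp only [hLf]
      _ = L P := h
      _ = Aᵀ * P + P * A := rfl
  -- equation
  have heq : Aᵀ * P + P * A = -Q := by
    rw [← hint_comm, hFTC, hf0, zero_sub]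
  -- symmetry of f t
  have hfsymm : ∀ t : ℝ, (f t)ᵀ = f t := by
    intro t
    have hQT : Qᵀ = Q := by
      have h := hQ.1
      rw [Matrix.IsHermitian] at h
      calc Qᵀ = Qᴴ := by ext i j; simp [Matrix.conjTranspose_apply]
        _ = Q := h
    have hexpT : ∀ M : Matrix (Fin n) (Fin n) ℝ, (exp (t • M))ᵀ = exp (t • Mᵀ) := by
      intro M
      rw [← Matrix.exp_transpose, Matrix.transpose_smul]
    show (exp (t • Aᵀ) * Q * exp (t • A))ᵀ = exp (t • Aᵀ) * Q * exp (t • A)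
    rw [Matrix.transpose_mul, Matrix.transpose_mul, hexpT, hexpT, hQT, Matrix.transpose_transpose,
      mul_assoc]
  -- symmetry of P
  let T : Matrix (Fin n) (Fin n) ℝ →L[ℝ] Matrix (Fin n) (Fin n) ℝ :=
    LinearMap.toContinuousLinearMap
      { toFun := fun M => Mᵀ
        map_add' := fun M₁ M₂ => Matrix.transpose_add M₁ M₂
        map_smul' := fun c M => Matrix.transpose_smul c M }
  have hPsymm : Pᵀ = P := by
    have h := T.integral_comp_comm hfint
    calc Pᵀ = T P := rfl
      _ = ∫ t in Ioi (0:ℝ), T (f t) := h.symm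
      _ = ∫ t in Ioi (0:ℝ), f t := by
          apply integral_congr_ae
          exact ae_of_all _ fun t => hfsymm t
      _ = P := rfl
  have hPherm : P.IsHermitian := by
    rw [Matrix.IsHermitian]
    calc Pᴴ = Pᵀ := by ext i j; simp [Matrix.conjTranspose_apply]
      _ = P := hPsymm
  -- positivity
  have hPpos : ∀ x : Fin n → ℝ, x ≠ 0 → 0 < star x ⬝ᵥ P *ᵥ x := by
    intro x hx
    let qf : Matrix (Fin n) (Fin n) ℝ →L[ℝ] ℝ :=
      LinearMap.toContinuousLinearMap
        { toFun := fun M => x ⬝ᵥ M *ᵥ x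
          map_add' := fun M₁ M₂ => by simp [Matrix.add_mulVec, dotProduct_add]
          map_smul' := fun c M => by simp [Matrix.smul_mulVec] }
    set g : ℝ → ℝ := fun t => qf (f t) with hg
    have hgval : ∀ t : ℝ, g t = (exp (t • A) *ᵥ x) ⬝ᵥ Q *ᵥ (exp (t • A) *ᵥ x) := by
      intro t
      have hT : exp (t • Aᵀ) = (exp (t • A))ᵀ := by
        rw [← Matrix.exp_transpose, Matrix.transpose_smul]
      show x ⬝ᵥ (exp (t • Aᵀ) * Q * exp (t • A)) *ᵥ x = _
      rw [hT, mul_assoc, ← Matrix.mulVec_mulVec, Matrix.dotProduct_mulVec,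
        Matrix.vecMul_transpose, Matrix.mulVec_mulVec]
    have hgpos : ∀ t : ℝ, 0 < g t := by
      intro t
      rw [hgval]
      have hy : exp (t • A) *ᵥ x ≠ 0 := by
        intro h0
        apply hx
        have hinj := Matrix.mulVec_injective_iff_isUnit.mpr (Matrix.isUnit_exp (t • A))
        apply hinj
        rw [h0, Matrix.mulVec_zero]
      have := hQ.dotProduct_mulVec_pos hy
      simpa using this
    have hgint : IntegrableOn g (Ioi (0:ℝ)) := qf.integrable_comp hfint
    have hgP : qf P = ∫ t in Ioi (0:ℝ), g t := (qf.integral_comp_comm hfint).symm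
    have hpos : 0 < ∫ t in Ioi (0:ℝ), g t := by
      rw [setIntegral_pos_iff_support_of_nonneg_ae
        (ae_of_all _ fun t => (hgpos t).le : (0:ℝ → ℝ) ≤ᵐ[volume.restrict (Ioi 0)] g) hgint]
      have hsub : Ioi (0:ℝ) ⊆ Function.support g := fun t _ => (hgpos t).ne'
      rw [Set.inter_eq_self_of_subset_right hsub, Real.volume_Ioi]
      simp
    have : qf P = x ⬝ᵥ P *ᵥ x := rfl
    rw [show star x = x from star_trivial x, ← this, hgP]
    exact hpos
  refine ⟨P, PosDef.of_dotProduct_mulVec_pos hPherm hPpos, ?_⟩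
  rw [show P * A + Aᵀ * P = Aᵀ * P + P * A from add_comm _ _, heq, neg_add_cancel]
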